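/- Let f, g and h be entire functions given by everywhere absolutely convergent vector valued Dirichlet series, and let p ≥ 0, q ≥ 0, m ≥ 0 be integers. Assume 0 < λ_h^{(m,q)}(f) ≤ ρ_h^{(m,q)}(f) < +∞ and 0 < λ_h^{(m,p)}(g) ≤ ρ_h^{(m,p)}(g) < +∞. Then ρ_g^{(p,q)}(f) · ρ_f^{(q,p)}(g) ≥ 1. Moreover, if f is of regular relative (m,q) Ritt growth with respect to h and g is of regular relative (m,p) Ritt growth with respect to h, then ρ_g^{(p,q)}(f) · ρ_f^{(q,p)}(g) = 1. -/

import Mathlib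

open Filter Topology

noncomputable section

/-- An entire function given by an everywhere absolutely convergent
vector valued Dirichlet series, with coefficients in a Banach space `E`. -/
structure VVDS (E : Type*) [NormedAddCommGroup E] [NormedSpace ℂ E] [CompleteSpace E] where
  a : ℕ → E
  lam : ℕ → ℝ
  lam_pos : ∀ n, 0 < lam n
  lam_strictMono : StrictMono lam
  lam_tendsto : Tendsto lam atTop atTop
  log_index_bound : ∃ D : ℝ, ∀ᶠ n : ℕ in atTop, Real.log (n : ℝ) / lam n ≤ D
  coeff_decay : Tendsto (fun n => Real.log ‖a n‖ / lam n) atTop atBot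
  abs_conv : ∀ s : ℂ, Summable (fun n => Real.exp (s.re * lam n) * ‖a n‖)

variable {E F G : Type*} [NormedAddCommGroup E] [NormedSpace ℂ E] [CompleteSpace E]
  [NormedAddCommGroup F] [NormedSpace ℂ F] [CompleteSpace F]
  [NormedAddCommGroup G] [NormedSpace ℂ G] [CompleteSpace G]

/-- The entire function defined by the vector valued Dirichlet series. -/
def VVDS.toFun (f : VVDS E) (s : ℂ) : E := ∑' n, Complex.exp (s * (f.lam n : ℂ)) • f.a n

/-- The maximum modulus function `M_f(σ) = sup_t ‖f(σ+it)‖`. -/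
def VVDS.M (f : VVDS E) (σ : ℝ) : ℝ := ⨆ t : ℝ, ‖f.toFun ((σ : ℂ) + (t : ℂ) * Complex.I)‖

/-- The inverse function of the maximum modulus function. -/
def VVDS.Minv (f : VVDS E) (y : ℝ) : ℝ := sInf {σ : ℝ | y ≤ f.M σ}

/-- The (p,q)-th relative Ritt order of `f` with respect to `g`. -/
def relRittOrder (p q : ℕ) (f : VVDS E) (g : VVDS F) : EReal :=
  limsup (fun σ : ℝ =>
    ((Real.log^[p] (g.Minv (f.M σ)) / Real.log^[q] σ : ℝ) : EReal)) atTop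

/-- The (p,q)-th relative Ritt lower order of `f` with respect to `g`. -/
def relRittLowerOrder (p q : ℕ) (f : VVDS E) (g : VVDS F) : EReal :=
  liminf (fun σ : ℝ =>
    ((Real.log^[p] (g.Minv (f.M σ)) / Real.log^[q] σ : ℝ) : EReal)) atTop

/-- The (p,q)-th relative Ritt type of `f` with respect to `g`. -/
def relRittType (p q : ℕ) (f : VVDS E) (g : VVDS F) : EReal :=
  limsup (fun σ : ℝ =>
    ((Real.log^[p-1] (g.Minv (f.M σ)) /
      (Real.log^[q-1] σ) ^ (relRittOrder p q f g).toReal : ℝ) : EReal)) atTop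

/-- The (p,q)-th relative Ritt lower type of `f` with respect to `g`. -/
def relRittLowerType (p q : ℕ) (f : VVDS E) (g : VVDS F) : EReal :=
  liminf (fun σ : ℝ =>
    ((Real.log^[p-1] (g.Minv (f.M σ)) /
      (Real.log^[q-1] σ) ^ (relRittOrder p q f g).toReal : ℝ) : EReal)) atTop

/-- The (p,q)-th relative Ritt weak type of `f` with respect to `g`. -/
def relRittWeakType (p q : ℕ) (f : VVDS E) (g : VVDS F) : EReal :=
  liminf (fun σ : ℝ =>
    ((Real.log^[p-1] (g.Minv (f.M σ)) /
      (Real.log^[q-1] σ) ^ (relRittLowerOrder p q f g).toReal : ℝ) : EReal)) atTop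

/-- The growth indicator `τ̄_g^{(p,q)}(f)`. -/
def relRittUpperWeakType (p q : ℕ) (f : VVDS E) (g : VVDS F) : EReal :=
  limsup (fun σ : ℝ =>
    ((Real.log^[p-1] (g.Minv (f.M σ)) /
      (Real.log^[q-1] σ) ^ (relRittLowerOrder p q f g).toReal : ℝ) : EReal)) atTop



lemma log_iter_tendsto (k : ℕ) : Tendsto (Real.log^[k]) atTop atTop := by
  induction k with
  | zero => simpa using tendsto_id
  | succ n ih =>
      rw [Function.iterate_succ']
      exact Real.tendsto_log_atTop.comp ih

lemma rpow_interp_le_max {a b x : ℝ} (ha : 0 ≤ a) (hb : 0 ≤ b) (hx0 : 0 ≤ x) (hx1 : x ≤ 1) :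
    a ^ (1 - x) * b ^ x ≤ max a b := by
  set c := max a b with hc
  have hc0 : 0 ≤ c := le_trans ha (le_max_left a b)
  calc a ^ (1 - x) * b ^ x ≤ c ^ (1 - x) * c ^ x := by
        apply mul_le_mul (Real.rpow_le_rpow ha (le_max_left a b) (by linarith))
          (Real.rpow_le_rpow hb (le_max_right a b) hx0)
          (Real.rpow_nonneg hb x) (Real.rpow_nonneg hc0 _)
    _ = c ^ ((1 - x) + x) := (Real.rpow_add' hc0 (by norm_num)).symm
    _ = c := by norm_num

lemma ereal_le_of_forall_lt {X : EReal} {r : ℝ} (h : ∀ d : ℝ, d < r → (d : EReal) ≤ X) :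
    (r : EReal) ≤ X := by
  by_contra hX
  push_neg at hX
  induction X using EReal.rec with
  | bot =>
      exact EReal.coe_ne_bot _ (le_bot_iff.mp (h (r - 1) (by linarith)))
  | coe x =>
      have hx : x < r := by exact_mod_cast hX
      obtain ⟨d, hd1, hd2⟩ := exists_between hx
      have := h d hd2
      rw [EReal.coe_le_coe_iff] at this
      linarith
  | top => exact (not_top_lt hX)

lemma ereal_ge_of_forall_gt {X : EReal} {r : ℝ} (h : ∀ d : ℝ, r < d → X ≤ (d : EReal)) :
    X ≤ (r : EReal) := by
  by_contra hX
  push_neg at hX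
  induction X using EReal.rec with
  | bot => exact (not_lt_bot hX)
  | coe x =>
      have hx : r < x := by exact_mod_cast hX
      obtain ⟨d, hd1, hd2⟩ := exists_between hx
      have := h d hd1
      rw [EReal.coe_le_coe_iff] at this
      linarith
  | top =>
      exact EReal.coe_ne_top _ (top_le_iff.mp (h (r + 1) (by linarith)))
namespace VVDS
variable {E : Type*} [NormedAddCommGroup E] [NormedSpace ℂ E] [CompleteSpace E]

/-- The majorant series. -/
def A (f : VVDS E) (σ : ℝ) : ℝ := ∑' n, Real.exp (σ * f.lam n) * ‖f.a n‖

variable (f : VVDS E)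

lemma summable_A (σ : ℝ) : Summable (fun n => Real.exp (σ * f.lam n) * ‖f.a n‖) := by
  simpa using f.abs_conv (σ : ℂ)

lemma norm_term (s : ℂ) (n : ℕ) :
    ‖Complex.exp (s * (f.lam n : ℂ)) • f.a n‖ = Real.exp (s.re * f.lam n) * ‖f.a n‖ := by
  rw [norm_smul, Complex.norm_exp]
  congr 2
  simp [Complex.mul_re]

lemma summable_term (s : ℂ) : Summable (fun n => Complex.exp (s * (f.lam n : ℂ)) • f.a n) := by
  apply Summable.of_norm
  simpa only [f.norm_term] using f.abs_conv s

lemma norm_toFun_le (s : ℂ) : ‖f.toFun s‖ ≤ f.A s.re := by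
  rw [VVDS.toFun, VVDS.A]
  refine le_trans (norm_tsum_le_tsum_norm ?_) (le_of_eq ?_)
  · simpa only [f.norm_term] using f.abs_conv s
  · exact tsum_congr fun n => f.norm_term s n

lemma A_nonneg (σ : ℝ) : 0 ≤ f.A σ :=
  tsum_nonneg fun n => mul_nonneg (Real.exp_pos _).le (norm_nonneg _)

lemma A_mono : Monotone f.A := by
  intro σ₁ σ₂ hle
  refine Summable.tsum_le_tsum (fun n => ?_) (f.summable_A σ₁) (f.summable_A σ₂)
  exact mul_le_mul_of_nonneg_right
    (Real.exp_le_exp.2 (mul_le_mul_of_nonneg_right hle (f.lam_pos n).le)) (norm_nonneg _)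

lemma A_le_exp {σ σ₀ : ℝ} (h : σ ≤ σ₀) :
    f.A σ ≤ Real.exp ((σ - σ₀) * f.lam 0) * f.A σ₀ := by
  rw [VVDS.A, VVDS.A, ← tsum_mul_left]
  refine Summable.tsum_le_tsum (fun n => ?_) (f.summable_A σ) ((f.summable_A σ₀).mul_left _)
  have h1 : σ * f.lam n = (σ - σ₀) * f.lam n + σ₀ * f.lam n := by ring
  rw [h1, Real.exp_add, mul_assoc]
  refine mul_le_mul_of_nonneg_right (Real.exp_le_exp.2 ?_)
    (mul_nonneg (Real.exp_pos _).le (norm_nonneg _))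
  exact mul_le_mul_of_nonpos_left (f.lam_strictMono.monotone (Nat.zero_le n)) (by linarith)

lemma A_tendsto_zero : Tendsto f.A atBot (𝓝 0) := by
  have hup : Tendsto (fun σ : ℝ => Real.exp ((σ - 0) * f.lam 0) * f.A 0) atBot (𝓝 0) := by
    have h1 : Tendsto (fun σ : ℝ => (σ - 0) * f.lam 0) atBot atBot := by
      simpa using (tendsto_id (α := ℝ) (x := atBot)).atBot_mul_const (f.lam_pos 0)
    simpa using (Real.tendsto_exp_atBot.comp h1).mul_const (f.A 0)
  refine tendsto_of_tendsto_of_tendsto_of_le_of_le' tendsto_const_nhds hup ?_ ?_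
  · exact Eventually.of_forall fun σ => f.A_nonneg σ
  · filter_upwards [eventually_le_atBot (0:ℝ)] with σ hσ
    exact f.A_le_exp hσ

lemma A_continuous : Continuous f.A := by
  rw [continuous_iff_continuousAt]
  intro x
  have hsum := f.summable_A (x + 1)
  have hb : ∀ (n : ℕ) (σ : ℝ), σ ∈ Set.Iio (x + 1) →
      ‖Real.exp (σ * f.lam n) * ‖f.a n‖‖ ≤ Real.exp ((x + 1) * f.lam n) * ‖f.a n‖ := by
    intro n σ hσ
    rw [Real.norm_eq_abs, abs_of_nonneg (mul_nonneg (Real.exp_pos _).le (norm_nonneg _))]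
    exact mul_le_mul_of_nonneg_right
      (Real.exp_le_exp.2 (mul_le_mul_of_nonneg_right (le_of_lt hσ) (f.lam_pos n).le))
      (norm_nonneg _)
  have huni := tendstoUniformlyOn_tsum hsum hb
  have hco : ContinuousOn f.A (Set.Iio (x + 1)) := by
    refine huni.continuousOn (Frequently.of_forall fun t => ?_)
    exact (continuous_finset_sum t fun n _ =>
      ((Real.continuous_exp.comp (continuous_id.mul continuous_const)).mul
        continuous_const)).continuousOn
  exact hco.continuousAt (Iio_mem_nhds (lt_add_one x))

lemma differentiable_toFun : Differentiable ℂ f.toFun := by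
  intro s
  set R := s.re + 1 with hR
  have hU : IsOpen {z : ℂ | z.re < R} := isOpen_lt Complex.continuous_re continuous_const
  have hd : DifferentiableOn ℂ f.toFun {z : ℂ | z.re < R} := by
    refine Complex.differentiableOn_tsum_of_summable_norm (f.summable_A R)
      (fun n => ?_) hU (fun n w hw => ?_)
    · exact ((differentiable_id.mul (differentiable_const _)).cexp.smul_const
        (f.a n)).differentiableOn
    · rw [f.norm_term]
      exact mul_le_mul_of_nonneg_right
        (Real.exp_le_exp.2 (mul_le_mul_of_nonneg_right (le_of_lt hw) (f.lam_pos n).le))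
        (norm_nonneg _)
  exact hd.differentiableAt (hU.mem_nhds (show s.re < R by simp [hR]))

lemma bddAbove_M (σ : ℝ) :
    BddAbove (Set.range fun t : ℝ => ‖f.toFun ((σ : ℂ) + (t : ℂ) * Complex.I)‖) := by
  refine ⟨f.A σ, ?_⟩
  rintro y ⟨t, rfl⟩
  simpa using f.norm_toFun_le ((σ : ℂ) + (t : ℂ) * Complex.I)

lemma M_le_A (σ : ℝ) : f.M σ ≤ f.A σ := by
  refine ciSup_le fun t => ?_
  simpa using f.norm_toFun_le ((σ : ℂ) + (t : ℂ) * Complex.I)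

lemma M_nonneg (σ : ℝ) : 0 ≤ f.M σ :=
  le_trans (norm_nonneg _) (le_ciSup (f.bddAbove_M σ) (0 : ℝ))

lemma norm_le_M (s : ℂ) : ‖f.toFun s‖ ≤ f.M s.re := by
  have := le_ciSup (f.bddAbove_M s.re) s.im
  simpa [Complex.re_add_im, VVDS.M] using this

lemma M_tendsto_atBot : Tendsto f.M atBot (𝓝 0) := by
  refine tendsto_of_tendsto_of_tendsto_of_le_of_le tendsto_const_nhds f.A_tendsto_zero
    (fun σ => f.M_nonneg σ) (fun σ => f.M_le_A σ)

set_option maxHeartbeats 800000 in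
lemma M_key_estimate {σa σ σb : ℝ} (h1 : σa ≤ σ) (h2 : σ ≤ σb) (h3 : σa < σb) :
    f.M σ ≤ max (f.A σa) (f.M σb) := by
  refine ciSup_le fun t => ?_
  set c : ℝ := σb - σa with hcdef
  have hc : 0 < c := by simp [hcdef]; linarith
  set g : ℂ → E := fun z => f.toFun ((σa : ℂ) + z * (c : ℂ)) with hg
  have hgd : Differentiable ℂ g :=
    f.differentiable_toFun.comp ((differentiable_const _).add
      (differentiable_id.mul (differentiable_const _)))
  have hre : ∀ z : ℂ, ((σa : ℂ) + z * (c : ℂ)).re = σa + z.re * c := by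
    intro z; simp [Complex.add_re, Complex.mul_re]
  have hB : BddAbove ((norm ∘ g) '' Complex.HadamardThreeLines.verticalClosedStrip 0 1) := by
    refine ⟨f.A σb, ?_⟩
    rintro y ⟨z, hz, rfl⟩
    have h4 : σa + z.re * c ≤ σb := by
      have : z.re ≤ 1 := hz.2
      nlinarith
    calc ‖g z‖ ≤ f.A (((σa : ℂ) + z * (c : ℂ)).re) := f.norm_toFun_le _
      _ ≤ f.A σb := by rw [hre]; exact f.A_mono h4
  have ha' : ∀ z ∈ Complex.re ⁻¹' {0}, ‖g z‖ ≤ f.A σa := by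
    intro z hz
    have h0 : z.re = 0 := hz
    calc ‖g z‖ ≤ f.M (((σa : ℂ) + z * (c : ℂ)).re) := f.norm_le_M _
      _ = f.M σa := by rw [hre, h0]; ring_nf
      _ ≤ f.A σa := f.M_le_A σa
  have hb' : ∀ z ∈ Complex.re ⁻¹' {1}, ‖g z‖ ≤ f.M σb := by
    intro z hz
    have h0 : z.re = 1 := hz
    calc ‖g z‖ ≤ f.M (((σa : ℂ) + z * (c : ℂ)).re) := f.norm_le_M _
      _ = f.M σb := by rw [hre, h0]; simp [hcdef]
  set x : ℝ := (σ - σa) / c with hx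
  set z₀ : ℂ := (x : ℂ) + ((t / c : ℝ) : ℂ) * Complex.I with hz₀
  have hz₀re : z₀.re = x := by simp [hz₀]
  have hx0 : 0 ≤ x := div_nonneg (by linarith) hc.le
  have hx1 : x ≤ 1 := by
    rw [div_le_one hc]; simp [hcdef]; linarith
  have hmem : z₀ ∈ Complex.HadamardThreeLines.verticalClosedStrip 0 1 := by
    simp only [Complex.HadamardThreeLines.verticalClosedStrip, Set.mem_preimage, hz₀re]
    exact ⟨hx0, hx1⟩
  have happ := Complex.HadamardThreeLines.norm_le_interp_of_mem_verticalClosedStrip₀₁' g hmem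
    hgd.diffContOnCl hB ha' hb'
  have hcne : (c : ℂ) ≠ 0 := by exact_mod_cast hc.ne'
  have hzc : (σa : ℂ) + z₀ * (c : ℂ) = (σ : ℂ) + (t : ℂ) * Complex.I := by
    rw [hz₀, hx]
    push_cast
    field_simp
    ring
  have hgz : g z₀ = f.toFun ((σ : ℂ) + (t : ℂ) * Complex.I) := by
    simp only [hg]
    rw [hzc]
  rw [hgz, hz₀re] at happ
  exact happ.trans (rpow_interp_le_max (f.A_nonneg σa) (f.M_nonneg σb) hx0 hx1)

lemma M_mono : Monotone f.M := by
  intro σ σb hle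
  rcases eq_or_lt_of_le hle with rfl | hlt
  · exact le_rfl
  refine le_of_forall_pos_le_add fun ε hε => ?_
  have : ∀ᶠ σa in atBot, f.A σa < ε := f.A_tendsto_zero.eventually (gt_mem_nhds hε)
  obtain ⟨σ₀, hσ₀⟩ := (this.and (eventually_le_atBot σ)).exists
  have key := f.M_key_estimate hσ₀.2 hle (lt_of_le_of_lt hσ₀.2 hlt)
  calc f.M σ ≤ max (f.A σ₀) (f.M σb) := key
    _ ≤ f.M σb + ε := by
        rcases max_cases (f.A σ₀) (f.M σb) with ⟨he, _⟩ | ⟨he, _⟩ <;> rw [he]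
        · linarith [hσ₀.1, f.M_nonneg σb]
        · linarith

lemma term_diff_norm {σ₁ σ₂ t : ℝ} (h : σ₁ ≤ σ₂) (n : ℕ) :
    ‖Complex.exp (((σ₂ : ℂ) + (t : ℂ) * Complex.I) * (f.lam n : ℂ)) • f.a n -
      Complex.exp (((σ₁ : ℂ) + (t : ℂ) * Complex.I) * (f.lam n : ℂ)) • f.a n‖ =
      (Real.exp (σ₂ * f.lam n) - Real.exp (σ₁ * f.lam n)) * ‖f.a n‖ := by
  rw [← sub_smul, norm_smul]
  congr 1
  have e₂ : ((σ₂ : ℂ) + (t : ℂ) * Complex.I) * (f.lam n : ℂ) =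
      ((σ₂ * f.lam n : ℝ) : ℂ) + ((t * f.lam n : ℝ) : ℂ) * Complex.I := by push_cast; ring
  have e₁ : ((σ₁ : ℂ) + (t : ℂ) * Complex.I) * (f.lam n : ℂ) =
      ((σ₁ * f.lam n : ℝ) : ℂ) + ((t * f.lam n : ℝ) : ℂ) * Complex.I := by push_cast; ring
  rw [e₂, e₁, Complex.exp_add, Complex.exp_add, ← sub_mul, norm_mul]
  have h1 : ‖Complex.exp (((t * f.lam n : ℝ) : ℂ) * Complex.I)‖ = 1 := by
    rw [Complex.norm_exp]
    simp
  rw [h1, mul_one, ← Complex.ofReal_exp, ← Complex.ofReal_exp, ← Complex.ofReal_sub,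
    Complex.norm_real, Real.norm_eq_abs, abs_of_nonneg]
  have := Real.exp_le_exp.2 (mul_le_mul_of_nonneg_right h (f.lam_pos n).le)
  linarith

lemma summable_exp_diff {σ₁ σ₂ : ℝ} :
    Summable (fun n => (Real.exp (σ₂ * f.lam n) - Real.exp (σ₁ * f.lam n)) * ‖f.a n‖) := by
  have := (f.summable_A σ₂).sub (f.summable_A σ₁)
  simpa [sub_mul] using this

lemma norm_toFun_diff_le {σ₁ σ₂ t : ℝ} (h : σ₁ ≤ σ₂) :
    ‖f.toFun ((σ₂ : ℂ) + (t : ℂ) * Complex.I) - f.toFun ((σ₁ : ℂ) + (t : ℂ) * Complex.I)‖ ≤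
      f.A σ₂ - f.A σ₁ := by
  rw [VVDS.toFun, VVDS.toFun,
    ← Summable.tsum_sub (f.summable_term ((σ₂ : ℂ) + (t : ℂ) * Complex.I))
      (f.summable_term ((σ₁ : ℂ) + (t : ℂ) * Complex.I))]
  have hs : Summable (fun n =>
      ‖Complex.exp (((σ₂ : ℂ) + (t : ℂ) * Complex.I) * (f.lam n : ℂ)) • f.a n -
        Complex.exp (((σ₁ : ℂ) + (t : ℂ) * Complex.I) * (f.lam n : ℂ)) • f.a n‖) := by
    have := f.summable_exp_diff (σ₁ := σ₁) (σ₂ := σ₂)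
    refine this.congr fun n => ?_
    exact (f.term_diff_norm h n).symm
  refine le_trans (norm_tsum_le_tsum_norm hs) (le_of_eq ?_)
  have h2 : ∀ n, ‖Complex.exp (((σ₂ : ℂ) + (t : ℂ) * Complex.I) * (f.lam n : ℂ)) • f.a n -
      Complex.exp (((σ₁ : ℂ) + (t : ℂ) * Complex.I) * (f.lam n : ℂ)) • f.a n‖ =
      Real.exp (σ₂ * f.lam n) * ‖f.a n‖ - Real.exp (σ₁ * f.lam n) * ‖f.a n‖ := by
    intro n; rw [f.term_diff_norm h n]; ring
  rw [tsum_congr h2, Summable.tsum_sub (f.summable_A σ₂) (f.summable_A σ₁)]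
  rfl

lemma M_diff_le {σ₁ σ₂ : ℝ} (h : σ₁ ≤ σ₂) :
    |f.M σ₂ - f.M σ₁| ≤ f.A σ₂ - f.A σ₁ := by
  rw [abs_sub_le_iff]
  constructor
  · rw [sub_le_iff_le_add']
    refine ciSup_le fun t => ?_
    calc ‖f.toFun ((σ₂ : ℂ) + (t : ℂ) * Complex.I)‖
        ≤ ‖f.toFun ((σ₁ : ℂ) + (t : ℂ) * Complex.I)‖ +
          ‖f.toFun ((σ₂ : ℂ) + (t : ℂ) * Complex.I) -
            f.toFun ((σ₁ : ℂ) + (t : ℂ) * Complex.I)‖ := by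
          exact norm_le_insert' _ _
      _ ≤ f.M σ₁ + (f.A σ₂ - f.A σ₁) :=
          add_le_add (le_ciSup (f.bddAbove_M σ₁) t) (f.norm_toFun_diff_le h)
  · rw [sub_le_iff_le_add']
    refine ciSup_le fun t => ?_
    calc ‖f.toFun ((σ₁ : ℂ) + (t : ℂ) * Complex.I)‖
        ≤ ‖f.toFun ((σ₂ : ℂ) + (t : ℂ) * Complex.I)‖ +
          ‖f.toFun ((σ₂ : ℂ) + (t : ℂ) * Complex.I) -
            f.toFun ((σ₁ : ℂ) + (t : ℂ) * Complex.I)‖ := by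
          exact norm_le_insert _ _
      _ ≤ f.M σ₂ + (f.A σ₂ - f.A σ₁) :=
          add_le_add (le_ciSup (f.bddAbove_M σ₂) t) (f.norm_toFun_diff_le h)

lemma M_continuous : Continuous f.M := by
  rw [Metric.continuous_iff]
  intro x ε hε
  obtain ⟨δ, hδ, hA⟩ := Metric.continuous_iff.mp f.A_continuous x ε hε
  refine ⟨δ, hδ, fun σ hσ => ?_⟩
  have hAd := hA σ hσ
  rw [Real.dist_eq] at hAd ⊢
  rcases le_total x σ with hc | hc
  · refine lt_of_le_of_lt ((f.M_diff_le hc).trans ?_) hAd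
    rw [abs_of_nonneg (by linarith [f.A_mono hc])]
  · have h2 := f.M_diff_le hc
    rw [abs_sub_comm] at h2
    refine lt_of_le_of_lt (h2.trans ?_) hAd
    rw [abs_sub_comm, abs_of_nonneg (by linarith [f.A_mono hc])]

lemma exists_A_lt {y : ℝ} (hy : 0 < y) : ∃ σ₀ : ℝ, ∀ σ ≤ σ₀, f.A σ < y := by
  have : ∀ᶠ σ in atBot, f.A σ < y := f.A_tendsto_zero.eventually (gt_mem_nhds hy)
  exact eventually_atBot.mp this

lemma setS_nonempty (hM : Tendsto f.M atTop atTop) (y : ℝ) :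
    {σ : ℝ | y ≤ f.M σ}.Nonempty := by
  obtain ⟨σ, hσ⟩ := (hM.eventually_ge_atTop y).exists
  exact ⟨σ, hσ⟩

lemma setS_bddBelow {y : ℝ} (hy : 0 < y) : BddBelow {σ : ℝ | y ≤ f.M σ} := by
  obtain ⟨σ₀, hσ₀⟩ := f.exists_A_lt hy
  refine ⟨σ₀, fun σ hσ => ?_⟩
  by_contra hcon
  push_neg at hcon
  have : f.M σ ≤ f.A σ := f.M_le_A σ
  have h2 := hσ₀ σ hcon.le
  have h3 : y ≤ f.M σ := hσ
  linarith

lemma M_Minv_eq (hM : Tendsto f.M atTop atTop) {y : ℝ} (hy : 0 < y) :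
    f.M (f.Minv y) = y := by
  have hne := f.setS_nonempty hM y
  have hbdd := f.setS_bddBelow hy
  have hcl : IsClosed {σ : ℝ | y ≤ f.M σ} := isClosed_le continuous_const f.M_continuous
  have hmem : f.Minv y ∈ {σ : ℝ | y ≤ f.M σ} := hcl.csInf_mem hne hbdd
  refine le_antisymm ?_ hmem
  have hlt : ∀ σ < f.Minv y, f.M σ < y := by
    intro σ hσ
    by_contra hcon
    push_neg at hcon
    exact absurd (csInf_le hbdd hcon) (not_le.2 hσ)
  have htd : Tendsto f.M (𝓝[<] (f.Minv y)) (𝓝 (f.M (f.Minv y))) :=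
    (f.M_continuous.continuousAt).continuousWithinAt.tendsto
  refine le_of_tendsto htd ?_
  filter_upwards [self_mem_nhdsWithin] with σ hσ
  exact (hlt σ hσ).le

lemma Minv_ge_of_A_lt (hM : Tendsto f.M atTop atTop) {y σ₀ : ℝ} (h : f.A σ₀ < y) :
    σ₀ ≤ f.Minv y := by
  refine le_csInf (f.setS_nonempty hM y) fun σ hσ => ?_
  by_contra hcon
  push_neg at hcon
  have h1 : f.A σ ≤ f.A σ₀ := f.A_mono hcon.le
  have h2 : y ≤ f.M σ := hσ
  have h3 := f.M_le_A σ
  linarith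

lemma Minv_tendsto (hM : Tendsto f.M atTop atTop) : Tendsto f.Minv atTop atTop := by
  rw [tendsto_atTop_atTop]
  intro b
  refine ⟨f.A b + 1, fun y hy => ?_⟩
  exact f.Minv_ge_of_A_lt hM (by linarith)

lemma toFun_eq_zero_of_not_tendsto (hnot : ¬ Tendsto f.M atTop atTop) :
    ∀ σ : ℝ, f.M σ = 0 := by
  have hbdd : ∃ b : ℝ, ∀ σ : ℝ, f.M σ ≤ b := by
    by_contra hcon
    push_neg at hcon
    refine hnot (tendsto_atTop_atTop_of_monotone f.M_mono ?_)
    intro b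
    obtain ⟨σ, hσ⟩ := hcon b
    exact ⟨σ, hσ.le⟩
  obtain ⟨b, hb⟩ := hbdd
  have hbound : Bornology.IsBounded (Set.range f.toFun) := by
    rw [Metric.isBounded_iff_subset_closedBall 0]
    refine ⟨b, fun x hx => ?_⟩
    obtain ⟨s, rfl⟩ := hx
    simp only [Metric.mem_closedBall, dist_zero_right]
    exact (f.norm_le_M s).trans (hb s.re)
  have hconst := f.differentiable_toFun.apply_eq_apply_of_bounded hbound
  have hzero : ∀ s : ℂ, f.toFun s = 0 := by
    intro s
    have h1 : ∀ σ' : ℝ, ‖f.toFun s‖ ≤ f.A σ' := by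
      intro σ'
      rw [hconst s (σ' : ℂ)]
      simpa using f.norm_toFun_le (σ' : ℂ)
    have h2 : Tendsto (fun _ : ℝ => ‖f.toFun s‖) atBot (𝓝 ‖f.toFun s‖) := tendsto_const_nhds
    have h3 : ‖f.toFun s‖ ≤ 0 :=
      le_of_tendsto_of_tendsto h2 f.A_tendsto_zero (Eventually.of_forall h1)
    simpa using le_antisymm h3 (norm_nonneg _)
  intro σ
  rw [VVDS.M]
  simp only [hzero, norm_zero]
  exact ciSup_const

end VVDS

lemma log_iter_zero (k : ℕ) : Real.log^[k] (0:ℝ) = 0 := by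
  induction k with
  | zero => rfl
  | succ n ih => rw [Function.iterate_succ_apply, Real.log_zero, ih]

lemma M_tendsto_of_lowerOrder_pos {E G : Type*}
    [NormedAddCommGroup E] [NormedSpace ℂ E] [CompleteSpace E]
    [NormedAddCommGroup G] [NormedSpace ℂ G] [CompleteSpace G]
    {f : VVDS E} {h : VVDS G} {m q : ℕ}
    (hf1 : (0 : EReal) < relRittLowerOrder m q f h) :
    Tendsto f.M atTop atTop := by
  by_contra hnot
  have hz := f.toFun_eq_zero_of_not_tendsto hnot
  have hMinv0 : h.Minv 0 = 0 := by
    rw [VVDS.Minv]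
    have huniv : {σ : ℝ | (0:ℝ) ≤ h.M σ} = Set.univ :=
      Set.eq_univ_of_forall fun σ => h.M_nonneg σ
    rw [huniv]
    exact Real.sInf_of_not_bddBelow not_bddBelow_univ
  have hconst : relRittLowerOrder m q f h = (0 : EReal) := by
    rw [relRittLowerOrder]
    have heq : (fun σ : ℝ =>
        ((Real.log^[m] (h.Minv (f.M σ)) / Real.log^[q] σ : ℝ) : EReal)) =
        fun _ : ℝ => (0 : EReal) := by
      funext σ
      rw [hz σ, hMinv0, log_iter_zero, zero_div]
      rfl
    rw [heq, liminf_const]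
  rw [hconst] at hf1
  exact lt_irrefl _ hf1

section Key

variable {E F G : Type*} [NormedAddCommGroup E] [NormedSpace ℂ E] [CompleteSpace E]
  [NormedAddCommGroup F] [NormedSpace ℂ F] [CompleteSpace F]
  [NormedAddCommGroup G] [NormedSpace ℂ G] [CompleteSpace G]

lemma shared_eventually (f : VVDS E) (g : VVDS F) (p q : ℕ)
    (hfM : Tendsto f.M atTop atTop) (hgM : Tendsto g.M atTop atTop) :
    ∀ᶠ σ : ℝ in atTop, 0 < Real.log^[q] σ ∧
      0 < Real.log^[p] (g.Minv (f.M σ)) ∧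
      g.M (g.Minv (f.M σ)) = f.M σ := by
  have hσ' : Tendsto (fun σ : ℝ => g.Minv (f.M σ)) atTop atTop :=
    (g.Minv_tendsto hgM).comp hfM
  have e1 : ∀ᶠ σ : ℝ in atTop, 0 < Real.log^[q] σ :=
    (log_iter_tendsto q).eventually_gt_atTop 0
  have e2 : ∀ᶠ σ : ℝ in atTop, 0 < Real.log^[p] (g.Minv (f.M σ)) :=
    ((log_iter_tendsto p).comp hσ').eventually_gt_atTop 0
  have e3 : ∀ᶠ σ : ℝ in atTop, g.M (g.Minv (f.M σ)) = f.M σ := by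
    filter_upwards [hfM.eventually_gt_atTop 0] with σ hσ
    exact g.M_Minv_eq hgM hσ
  filter_upwards [e1, e2, e3] with σ h1 h2 h3
  exact ⟨h1, h2, h3⟩

lemma freq_div_le (f : VVDS E) (g : VVDS F) (h : VVDS G) (p q m : ℕ)
    (hfM : Tendsto f.M atTop atTop) (hgM : Tendsto g.M atTop atTop)
    {cf cg : ℝ} (hcg : 0 < cg)
    (h1 : ∃ᶠ σ : ℝ in atTop, cf ≤ Real.log^[m] (h.Minv (f.M σ)) / Real.log^[q] σ)
    (h2 : ∀ᶠ s : ℝ in atTop, Real.log^[m] (h.Minv (g.M s)) / Real.log^[p] s ≤ cg) :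
    ∃ᶠ σ : ℝ in atTop, cf / cg ≤ Real.log^[p] (g.Minv (f.M σ)) / Real.log^[q] σ := by
  have hσ' : Tendsto (fun σ : ℝ => g.Minv (f.M σ)) atTop atTop :=
    (g.Minv_tendsto hgM).comp hfM
  have h2' : ∀ᶠ σ : ℝ in atTop,
      Real.log^[m] (h.Minv (g.M (g.Minv (f.M σ)))) / Real.log^[p] (g.Minv (f.M σ)) ≤ cg :=
    hσ'.eventually h2
  refine (h1.and_eventually (h2'.and (shared_eventually f g p q hfM hgM))).mono ?_
  rintro σ ⟨ha, hb, hq, hp, hid⟩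
  rw [hid] at hb
  have k1 : cf * Real.log^[q] σ ≤ Real.log^[m] (h.Minv (f.M σ)) := (le_div_iff₀ hq).mp ha
  have k2 : Real.log^[m] (h.Minv (f.M σ)) ≤ cg * Real.log^[p] (g.Minv (f.M σ)) :=
    (div_le_iff₀ hp).mp hb
  rw [div_le_div_iff₀ hcg hq]
  nlinarith

lemma ev_div_le (f : VVDS E) (g : VVDS F) (h : VVDS G) (p q m : ℕ)
    (hfM : Tendsto f.M atTop atTop) (hgM : Tendsto g.M atTop atTop)
    {cf cg : ℝ} (hcg : 0 < cg)
    (h1 : ∀ᶠ σ : ℝ in atTop, Real.log^[m] (h.Minv (f.M σ)) / Real.log^[q] σ ≤ cf)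
    (h2 : ∀ᶠ s : ℝ in atTop, cg ≤ Real.log^[m] (h.Minv (g.M s)) / Real.log^[p] s) :
    ∀ᶠ σ : ℝ in atTop, Real.log^[p] (g.Minv (f.M σ)) / Real.log^[q] σ ≤ cf / cg := by
  have hσ' : Tendsto (fun σ : ℝ => g.Minv (f.M σ)) atTop atTop :=
    (g.Minv_tendsto hgM).comp hfM
  have h2' : ∀ᶠ σ : ℝ in atTop,
      cg ≤ Real.log^[m] (h.Minv (g.M (g.Minv (f.M σ)))) / Real.log^[p] (g.Minv (f.M σ)) :=
    hσ'.eventually h2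
  filter_upwards [h1, h2', shared_eventually f g p q hfM hgM] with σ ha hb hc
  obtain ⟨hq, hp, hid⟩ := hc
  rw [hid] at hb
  have k1 : Real.log^[m] (h.Minv (f.M σ)) ≤ cf * Real.log^[q] σ := (div_le_iff₀ hq).mp ha
  have k2 : cg * Real.log^[p] (g.Minv (f.M σ)) ≤ Real.log^[m] (h.Minv (f.M σ)) :=
    (le_div_iff₀ hp).mp hb
  rw [div_le_div_iff₀ hq hcg]
  nlinarith

end Key

lemma ereal_one_le_mul {a b : ℝ} {X Y : EReal} (ha : 0 < a) (hb : 0 < b)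
    (hab : 1 ≤ a * b) (hX : (a : EReal) ≤ X) (hY : (b : EReal) ≤ Y) : 1 ≤ X * Y := by
  induction X using EReal.rec with
  | bot => exact absurd hX (by simp [EReal.coe_ne_bot])
  | top =>
      rw [EReal.top_mul_of_pos (lt_of_lt_of_le (by exact_mod_cast hb) hY)]
      exact le_top
  | coe x =>
      induction Y using EReal.rec with
      | bot => exact absurd hY (by simp [EReal.coe_ne_bot])
      | top =>
          rw [EReal.mul_top_of_pos (lt_of_lt_of_le (by exact_mod_cast ha) hX)]
          exact le_top
      | coe y =>
          rw [← EReal.coe_mul, ← EReal.coe_one, EReal.coe_le_coe_iff]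
          rw [EReal.coe_le_coe_iff] at hX hY
          nlinarith

section Bounds

variable {E F G : Type*} [NormedAddCommGroup E] [NormedSpace ℂ E] [CompleteSpace E]
  [NormedAddCommGroup F] [NormedSpace ℂ F] [CompleteSpace F]
  [NormedAddCommGroup G] [NormedSpace ℂ G] [CompleteSpace G]

lemma order_lower_bound (f : VVDS E) (g : VVDS F) (h : VVDS G) (p q m : ℕ)
    (hfM : Tendsto f.M atTop atTop) (hgM : Tendsto g.M atTop atTop)
    {rf rg : ℝ} (hrf : 0 < rf) (hrg : 0 < rg)
    (hRf : (rf : EReal) = relRittOrder m q f h)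
    (hRg : (rg : EReal) = relRittOrder m p g h) :
    ((rf / rg : ℝ) : EReal) ≤ relRittOrder p q f g := by
  apply ereal_le_of_forall_lt
  intro d hd
  obtain ⟨ε, hε0, hεrf, hεd⟩ : ∃ ε : ℝ, 0 < ε ∧ ε < rf ∧ d ≤ (rf - ε) / (rg + ε) := by
    rcases le_or_gt d 0 with hd0 | hd0
    · exact ⟨rf / 2, by linarith, by linarith,
        hd0.trans (div_nonneg (by linarith) (by linarith))⟩
    · have hdrg : d * rg < rf := (lt_div_iff₀ hrg).mp hd
      refine ⟨min (rf / 2) ((rf - d * rg) / (2 * (1 + d))), ?_, ?_, ?_⟩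
      · exact lt_min (by linarith) (div_pos (by linarith) (by linarith))
      · exact lt_of_le_of_lt (min_le_left _ _) (by linarith)
      · set ε := min (rf / 2) ((rf - d * rg) / (2 * (1 + d))) with hε
        have hε1 : ε ≤ (rf - d * rg) / (2 * (1 + d)) := min_le_right _ _
        have hε2 : 0 < ε := lt_min (by linarith) (div_pos (by linarith) (by linarith))
        have hε3 : ε * (2 * (1 + d)) ≤ rf - d * rg := by
          rw [← le_div_iff₀ (by linarith)]
          exact hε1
        rw [le_div_iff₀ (by linarith)]
        nlinarith
  have hfreq : ∃ᶠ σ : ℝ in atTop,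
      rf - ε ≤ Real.log^[m] (h.Minv (f.M σ)) / Real.log^[q] σ := by
    have hlt : ((rf - ε : ℝ) : EReal) < relRittOrder m q f h := by
      rw [← hRf]; exact_mod_cast (by linarith : rf - ε < rf)
    have hfr := frequently_lt_of_lt_limsup (u := fun σ : ℝ =>
      ((Real.log^[m] (h.Minv (f.M σ)) / Real.log^[q] σ : ℝ) : EReal)) (f := atTop)
      (b := ((rf - ε : ℝ) : EReal))
    rw [← relRittOrder] at hfr
    exact (hfr hlt).mono fun σ hσ => (EReal.coe_lt_coe_iff.mp hσ).le
  have hev : ∀ᶠ s : ℝ in atTop,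
      Real.log^[m] (h.Minv (g.M s)) / Real.log^[p] s ≤ rg + ε := by
    have hlt : relRittOrder m p g h < ((rg + ε : ℝ) : EReal) := by
      rw [← hRg]; exact_mod_cast (by linarith : rg < rg + ε)
    have hev' := eventually_lt_of_limsup_lt (u := fun s : ℝ =>
      ((Real.log^[m] (h.Minv (g.M s)) / Real.log^[p] s : ℝ) : EReal)) (f := atTop)
      (b := ((rg + ε : ℝ) : EReal))
    rw [← relRittOrder] at hev'
    exact (hev' hlt).mono fun s hs => (EReal.coe_lt_coe_iff.mp hs).le
  have hmain := freq_div_le f g h p q m hfM hgM (by linarith : (0:ℝ) < rg + ε) hfreq hev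
  have hle : (((rf - ε) / (rg + ε) : ℝ) : EReal) ≤ relRittOrder p q f g := by
    rw [relRittOrder]
    exact le_limsup_of_frequently_le (hmain.mono fun σ hσ => EReal.coe_le_coe_iff.mpr hσ)
  exact le_trans (EReal.coe_le_coe_iff.mpr hεd) hle

lemma order_upper_bound (f : VVDS E) (g : VVDS F) (h : VVDS G) (p q m : ℕ)
    (hfM : Tendsto f.M atTop atTop) (hgM : Tendsto g.M atTop atTop)
    {rf lg : ℝ} (hrf : 0 < rf) (hlg : 0 < lg)
    (hRf : (rf : EReal) = relRittOrder m q f h)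
    (hLg : (lg : EReal) = relRittLowerOrder m p g h) :
    relRittOrder p q f g ≤ ((rf / lg : ℝ) : EReal) := by
  apply ereal_ge_of_forall_gt
  intro d hd
  have hd0 : 0 < d := lt_trans (div_pos hrf hlg) hd
  obtain ⟨ε, hε0, hεlg, hεd⟩ : ∃ ε : ℝ, 0 < ε ∧ ε < lg ∧ (rf + ε) / (lg - ε) ≤ d := by
    have hdlg : rf < d * lg := (div_lt_iff₀ hlg).mp hd
    refine ⟨min (lg / 2) ((d * lg - rf) / (2 * (1 + d))), ?_, ?_, ?_⟩
    · exact lt_min (by linarith) (div_pos (by linarith) (by linarith))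
    · exact lt_of_le_of_lt (min_le_left _ _) (by linarith)
    · set ε := min (lg / 2) ((d * lg - rf) / (2 * (1 + d))) with hε
      have hε1 : ε ≤ (d * lg - rf) / (2 * (1 + d)) := min_le_right _ _
      have hε2 : 0 < ε := lt_min (by linarith) (div_pos (by linarith) (by linarith))
      have hε2' : ε ≤ lg / 2 := min_le_left _ _
      have hε3 : ε * (2 * (1 + d)) ≤ d * lg - rf := by
        rw [← le_div_iff₀ (by linarith)]
        exact hε1
      rw [div_le_iff₀ (by linarith)]
      nlinarith
  have hev1 : ∀ᶠ σ : ℝ in atTop,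
      Real.log^[m] (h.Minv (f.M σ)) / Real.log^[q] σ ≤ rf + ε := by
    have hlt : relRittOrder m q f h < ((rf + ε : ℝ) : EReal) := by
      rw [← hRf]; exact_mod_cast (by linarith : rf < rf + ε)
    have hev' := eventually_lt_of_limsup_lt (u := fun σ : ℝ =>
      ((Real.log^[m] (h.Minv (f.M σ)) / Real.log^[q] σ : ℝ) : EReal)) (f := atTop)
      (b := ((rf + ε : ℝ) : EReal))
    rw [← relRittOrder] at hev'
    exact (hev' hlt).mono fun σ hσ => (EReal.coe_lt_coe_iff.mp hσ).le
  have hev2 : ∀ᶠ s : ℝ in atTop,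
      lg - ε ≤ Real.log^[m] (h.Minv (g.M s)) / Real.log^[p] s := by
    have hlt : ((lg - ε : ℝ) : EReal) < relRittLowerOrder m p g h := by
      rw [← hLg]; exact_mod_cast (by linarith : lg - ε < lg)
    have hev' := eventually_lt_of_lt_liminf (u := fun s : ℝ =>
      ((Real.log^[m] (h.Minv (g.M s)) / Real.log^[p] s : ℝ) : EReal)) (f := atTop)
      (b := ((lg - ε : ℝ) : EReal))
    rw [← relRittLowerOrder] at hev'
    exact (hev' hlt).mono fun s hs => (EReal.coe_lt_coe_iff.mp hs).le
  have hmain := ev_div_le f g h p q m hfM hgM (by linarith : (0:ℝ) < lg - ε) hev1 hev2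
  have hle : relRittOrder p q f g ≤ (((rf + ε) / (lg - ε) : ℝ) : EReal) := by
    rw [relRittOrder]
    exact limsup_le_of_le (by isBoundedDefault)
      (hmain.mono fun σ hσ => EReal.coe_le_coe_iff.mpr hσ)
  exact le_trans hle (EReal.coe_le_coe_iff.mpr hεd)

end Bounds

theorem stmt_5 (f : VVDS E) (g : VVDS F) (h : VVDS G) (p q m : ℕ)
    (hf1 : (0 : EReal) < relRittLowerOrder m q f h)
    (hf2 : relRittLowerOrder m q f h ≤ relRittOrder m q f h)
    (hf3 : relRittOrder m q f h < ⊤)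
    (hg1 : (0 : EReal) < relRittLowerOrder m p g h)
    (hg2 : relRittLowerOrder m p g h ≤ relRittOrder m p g h)
    (hg3 : relRittOrder m p g h < ⊤)
    :
    1 ≤ relRittOrder p q f g * relRittOrder q p g f ∧ (relRittLowerOrder m q f h = relRittOrder m q f h → relRittLowerOrder m p g h = relRittOrder m p g h → relRittOrder p q f g * relRittOrder q p g f = 1) := by
  have hfM : Tendsto f.M atTop atTop := M_tendsto_of_lowerOrder_pos hf1
  have hgM : Tendsto g.M atTop atTop := M_tendsto_of_lowerOrder_pos hg1
  -- real values of the four orders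
  have hRf_pos : (0 : EReal) < relRittOrder m q f h := lt_of_lt_of_le hf1 hf2
  have hRg_pos : (0 : EReal) < relRittOrder m p g h := lt_of_lt_of_le hg1 hg2
  have hRf_ne_top : relRittOrder m q f h ≠ ⊤ := hf3.ne
  have hRg_ne_top : relRittOrder m p g h ≠ ⊤ := hg3.ne
  have hRf_ne_bot : relRittOrder m q f h ≠ ⊥ :=
    (lt_of_lt_of_le (bot_lt_iff_ne_bot.mpr (by simp)) hRf_pos.le).ne'
  have hRg_ne_bot : relRittOrder m p g h ≠ ⊥ :=
    (lt_of_lt_of_le (bot_lt_iff_ne_bot.mpr (by simp)) hRg_pos.le).ne'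
  set rf := (relRittOrder m q f h).toReal with hrf_def
  set rg := (relRittOrder m p g h).toReal with hrg_def
  have hRfcoe : (rf : EReal) = relRittOrder m q f h := EReal.coe_toReal hRf_ne_top hRf_ne_bot
  have hRgcoe : (rg : EReal) = relRittOrder m p g h := EReal.coe_toReal hRg_ne_top hRg_ne_bot
  have hrf_pos : 0 < rf := by
    have : (0 : EReal) < (rf : EReal) := by rw [hRfcoe]; exact hRf_pos
    exact_mod_cast this
  have hrg_pos : 0 < rg := by
    have : (0 : EReal) < (rg : EReal) := by rw [hRgcoe]; exact hRg_pos
    exact_mod_cast this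
  have ord1 : ((rf / rg : ℝ) : EReal) ≤ relRittOrder p q f g :=
    order_lower_bound f g h p q m hfM hgM hrf_pos hrg_pos hRfcoe hRgcoe
  have ord2 : ((rg / rf : ℝ) : EReal) ≤ relRittOrder q p g f :=
    order_lower_bound g f h q p m hgM hfM hrg_pos hrf_pos hRgcoe hRfcoe
  constructor
  · refine ereal_one_le_mul (div_pos hrf_pos hrg_pos) (div_pos hrg_pos hrf_pos) ?_ ord1 ord2
    have : rf / rg * (rg / rf) = 1 := by field_simp
    rw [this]
  · intro hregf hregg
    have hLfcoe : (rf : EReal) = relRittLowerOrder m q f h := by rw [hRfcoe, hregf]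
    have hLgcoe : (rg : EReal) = relRittLowerOrder m p g h := by rw [hRgcoe, hregg]
    have up1 : relRittOrder p q f g ≤ ((rf / rg : ℝ) : EReal) :=
      order_upper_bound f g h p q m hfM hgM hrf_pos hrg_pos hRfcoe hLgcoe
    have up2 : relRittOrder q p g f ≤ ((rg / rf : ℝ) : EReal) :=
      order_upper_bound g f h q p m hgM hfM hrg_pos hrf_pos hRgcoe hLfcoe
    have e1 : relRittOrder p q f g = ((rf / rg : ℝ) : EReal) := le_antisymm up1 ord1
    have e2 : relRittOrder q p g f = ((rg / rf : ℝ) : EReal) := le_antisymm up2 ord2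
    rw [e1, e2, ← EReal.coe_mul]
    have : rf / rg * (rg / rf) = 1 := by field_simp
    rw [this]
    rfl
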